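/- For β ∈ ℂ and x ∈ ℝ define s(β, x) = Σ_{m=0}^{∞} βᵐ x^{2m+1}/(2m+1)!. Let B be a 2×2 complex matrix and β₁, β₂ ∈ ℂ with tr B = β₁ + β₂ and det B = β₁ β₂. Define S(x) = Σ_{m=0}^{∞} (x^{2m+1}/(2m+1)!) Bᵐ. Then for every x ∈ ℝ, det S(x) = s(β₁, x) · s(β₂, x). -/

import Mathlib

open scoped Nat

/-- `s(β, x) = ∑_{m} βᵐ x^{2m+1}/(2m+1)!`. -/
noncomputable def sHyp (β : ℂ) (x : ℝ) : ℂ :=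
  ∑' m : ℕ, β ^ m * (x : ℂ) ^ (2 * m + 1) / ((2 * m + 1)! : ℂ)

/-- `S(x) = ∑_{m} (x^{2m+1}/(2m+1)!) Bᵐ`. -/
noncomputable def sinhMat2 (B : Matrix (Fin 2) (Fin 2) ℂ) (x : ℝ) :
    Matrix (Fin 2) (Fin 2) ℂ :=
  ∑' m : ℕ, ((x : ℂ) ^ (2 * m + 1) / ((2 * m + 1)! : ℂ)) • B ^ m


/-- Auxiliary sequence: `B^m = (abAux σ p m).1 • B + (abAux σ p m).2 • 1`
for a matrix with `B² = σ B - p 1`. -/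
noncomputable def abAux (σ p : ℂ) : ℕ → ℂ × ℂ
  | 0 => (0, 1)
  | m + 1 => (σ * (abAux σ p m).1 + (abAux σ p m).2, -p * (abAux σ p m).1)

lemma abAux_pow (σ p β : ℂ) (hβ : β ^ 2 = σ * β - p) :
    ∀ m : ℕ, β ^ m = β * (abAux σ p m).1 + (abAux σ p m).2 := by
  intro m
  induction m with
  | zero => simp [abAux]
  | succ m ih =>
    have : β ^ (m + 1) = β ^ m * β := pow_succ β m
    rw [this, ih, abAux]
    have : (β * (abAux σ p m).1 + (abAux σ p m).2) * β
        = β ^ 2 * (abAux σ p m).1 + β * (abAux σ p m).2 := by ring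
    rw [this, hβ]; ring

lemma abAux_bound (σ p : ℂ) (m : ℕ) :
    ‖(abAux σ p m).1‖ ≤ (‖σ‖ + ‖p‖ + 1) ^ m ∧
    ‖(abAux σ p m).2‖ ≤ (‖σ‖ + ‖p‖ + 1) ^ m := by
  induction m with
  | zero => simp [abAux]
  | succ m ih =>
    obtain ⟨h1, h2⟩ := ih
    have hK : (0:ℝ) ≤ ‖σ‖ + ‖p‖ + 1 := by positivity
    constructor
    · calc ‖σ * (abAux σ p m).1 + (abAux σ p m).2‖
          ≤ ‖σ * (abAux σ p m).1‖ + ‖(abAux σ p m).2‖ := norm_add_le _ _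
        _ = ‖σ‖ * ‖(abAux σ p m).1‖ + ‖(abAux σ p m).2‖ := by rw [norm_mul]
        _ ≤ ‖σ‖ * (‖σ‖ + ‖p‖ + 1) ^ m + (‖σ‖ + ‖p‖ + 1) ^ m := by
            gcongr
        _ ≤ (‖σ‖ + ‖p‖ + 1) * (‖σ‖ + ‖p‖ + 1) ^ m + 0 * (‖σ‖ + ‖p‖ + 1) ^ m
              := by nlinarith [pow_nonneg hK m, norm_nonneg σ, norm_nonneg p]
        _ = (‖σ‖ + ‖p‖ + 1) ^ (m + 1) := by ring
    · calc ‖-p * (abAux σ p m).1‖ = ‖p‖ * ‖(abAux σ p m).1‖ := by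
            rw [norm_mul, norm_neg]
        _ ≤ ‖p‖ * (‖σ‖ + ‖p‖ + 1) ^ m := by gcongr
        _ ≤ (‖σ‖ + ‖p‖ + 1) * (‖σ‖ + ‖p‖ + 1) ^ m := by
            gcongr; nlinarith [norm_nonneg σ, norm_nonneg p]
        _ = (‖σ‖ + ‖p‖ + 1) ^ (m + 1) := by ring

/-- Let `B` be a `2 × 2` complex matrix with eigenvalues `β₁, β₂` (i.e.
`tr B = β₁ + β₂` and `det B = β₁ β₂`). Then for every `x ∈ ℝ`,
`det S(x) = s(β₁, x) · s(β₂, x)`. -/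
theorem stmt13 (B : Matrix (Fin 2) (Fin 2) ℂ) (β₁ β₂ : ℂ)
    (htr : B.trace = β₁ + β₂) (hdet : B.det = β₁ * β₂) (x : ℝ) :
    (sinhMat2 B x).det = sHyp β₁ x * sHyp β₂ x := by
  set σ : ℂ := β₁ + β₂ with hσ
  set p : ℂ := β₁ * β₂ with hp
  set a : ℕ → ℂ := fun m => (abAux σ p m).1 with ha
  set b : ℕ → ℂ := fun m => (abAux σ p m).2 with hb
  set c : ℕ → ℂ := fun m => (x : ℂ) ^ (2 * m + 1) / ((2 * m + 1)! : ℂ) with hc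
  -- Summability
  set K : ℝ := ‖σ‖ + ‖p‖ + 1 with hK
  have hK0 : (0:ℝ) ≤ K := by positivity
  have hbound : ∀ (f : ℕ → ℂ), (∀ m, ‖f m‖ ≤ K ^ m) →
      Summable (fun m => c m * f m) := by
    intro f hf
    apply Summable.of_norm_bounded (g := fun m => |x| * (x ^ 2 * K) ^ m / m !)
    · have := (Real.summable_pow_div_factorial (x ^ 2 * K)).mul_left |x|
      convert this using 2 with m
      · rfl
      · ring
    · intro m
      have h1 : ‖c m * f m‖ = |x| ^ (2 * m + 1) / ((2 * m + 1)! : ℝ) * ‖f m‖ := by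
        rw [norm_mul]
        congr 1
        rw [hc]
        rw [norm_div, norm_pow, Complex.norm_real, Real.norm_eq_abs]
        congr 1
        simp [Complex.norm_natCast]
      rw [h1]
      have hfact : (m ! : ℝ) ≤ ((2 * m + 1)! : ℝ) := by
        exact_mod_cast Nat.factorial_le (by omega)
      have hfact0 : (0:ℝ) < (m ! : ℝ) := by positivity
      have hfact1 : (0:ℝ) < ((2 * m + 1)! : ℝ) := by positivity
      have hxpow : |x| ^ (2 * m + 1) = |x| * (x ^ 2) ^ m := by
        rw [pow_succ' ]
        congr 1
        rw [pow_mul, sq_abs]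
      calc |x| ^ (2 * m + 1) / ((2 * m + 1)! : ℝ) * ‖f m‖
          ≤ |x| ^ (2 * m + 1) / (m ! : ℝ) * (K ^ m) := by
            gcongr
            exact hf m
        _ = |x| * ((x ^ 2) ^ m * K ^ m) / m ! := by rw [hxpow]; ring
        _ = |x| * (x ^ 2 * K) ^ m / m ! := by rw [mul_pow]
  have hab : ∀ m, ‖a m‖ ≤ K ^ m ∧ ‖b m‖ ≤ K ^ m := fun m => abAux_bound σ p m
  have Sa : Summable (fun m => c m * a m) := hbound a fun m => (hab m).1
  have Sb : Summable (fun m => c m * b m) := hbound b fun m => (hab m).2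
  set u : ℂ := ∑' m, c m * a m with hu
  set v : ℂ := ∑' m, c m * b m with hv
  -- scalar series
  have hscal : ∀ β : ℂ, β ^ 2 = σ * β - p → sHyp β x = β * u + v := by
    intro β hβ
    have h1 : sHyp β x = ∑' m, (β * (c m * a m) + c m * b m) := by
      unfold sHyp
      apply tsum_congr
      intro m
      rw [abAux_pow σ p β hβ m]
      rw [hc]
      ring
    rw [h1, Summable.tsum_add (Sa.mul_left β) Sb, tsum_mul_left]
  -- Cayley–Hamilton for 2×2
  have hCH : B ^ 2 = σ • B - p • (1 : Matrix (Fin 2) (Fin 2) ℂ) := by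
    rw [← htr, ← hdet]
    ext i j
    fin_cases i <;> fin_cases j <;>
      simp [pow_two, Matrix.mul_apply, Fin.sum_univ_two, Matrix.trace_fin_two,
        Matrix.det_fin_two, Matrix.one_apply] <;> ring
  -- powers of B
  have hpowB : ∀ m, B ^ m = a m • B + b m • (1 : Matrix (Fin 2) (Fin 2) ℂ) := by
    intro m
    induction m with
    | zero => simp [ha, hb, abAux]
    | succ m ih =>
      rw [pow_succ, ih]
      have ha' : a (m + 1) = σ * a m + b m := rfl
      have hb' : b (m + 1) = -p * a m := rfl
      rw [ha', hb', Matrix.add_mul, Matrix.smul_mul, Matrix.smul_mul,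
        Matrix.one_mul, ← pow_two, hCH]
      rw [smul_sub, smul_smul, smul_smul]
      module
  -- the matrix series
  have hS : sinhMat2 B x = u • B + v • (1 : Matrix (Fin 2) (Fin 2) ℂ) := by
    unfold sinhMat2
    have h1 : ∀ m : ℕ, ((x : ℂ) ^ (2 * m + 1) / ((2 * m + 1)! : ℂ)) • B ^ m
        = (c m * a m) • B + (c m * b m) • (1 : Matrix (Fin 2) (Fin 2) ℂ) := by
      intro m
      rw [hpowB m, smul_add, smul_smul, smul_smul]
    rw [tsum_congr h1, Summable.tsum_add (Sa.smul_const B) (Sb.smul_const 1),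
      Summable.tsum_smul_const Sa, Summable.tsum_smul_const Sb]
  rw [hS, hscal β₁ (by rw [hσ, hp]; ring), hscal β₂ (by rw [hσ, hp]; ring)]
  -- determinant of u•B + v•1
  have hdet2 : (u • B + v • (1 : Matrix (Fin 2) (Fin 2) ℂ)).det
      = u ^ 2 * B.det + u * v * B.trace + v ^ 2 := by
    simp [Matrix.det_fin_two, Matrix.trace_fin_two, Matrix.one_apply]
    ring
  rw [hdet2, hdet, htr]
  ring
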